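/- Let G = (g, [,], ϖ, φ) be a Lie quasi-bialgebra with canonical double d, D the connected simply connected Lie group with Lie algebra d, G the connected subgroup with Lie algebra g, and π : G → A(g*,g) the group 1-cocycle integrating ϖ. Then the formula Ad^D_g(x + ξ) = Ad_g x + π_g Ad*_{g⁻¹} ξ + Ad*_{g⁻¹} ξ defines an action of G on d: one has Ad^D_g ∘ Ad^D_{g'} = Ad^D_{gg'} for all g, g' ∈ G, and (d/dt)|_{t=0} Ad^D_{e^{tu}}(x+ξ) = ad^d_u(x+ξ) for all u, x ∈ g, ξ ∈ g*. -/

import Mathlib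

section

variable {G E : Type*} [Group G]
  [NormedAddCommGroup E] [NormedSpace ℝ E] [FiniteDimensional ℝ E]

/-- The adjoint action of the group `G` on the double `d = g ⊕ g*`:
`Ad^D_g(x + ξ) = Ad_g x + π_g Ad*_{g⁻¹} ξ + Ad*_{g⁻¹} ξ`. -/
noncomputable def AdD (Ad : G →* (E ≃L[ℝ] E))
    (π : G → (E →L[ℝ] ℝ) →L[ℝ] E) (g : G) (X : E × (E →L[ℝ] ℝ)) :
    E × (E →L[ℝ] ℝ) :=
  (Ad g X.1 + π g (X.2.comp (Ad g⁻¹).toContinuousLinearMap),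
    X.2.comp (Ad g⁻¹).toContinuousLinearMap)

/-- The formula `Ad^D_g(x+ξ) = Ad_g x + π_g Ad*_{g⁻¹}ξ + Ad*_{g⁻¹}ξ` defines an action
of `G` on `d = g ⊕ g*`, whose infinitesimal generator in the direction `u ∈ g` is the
adjoint action `ad^d_u(x+ξ) = ([u,x] + ϖ_u ξ, −ad*_u ξ)` of the double. Here the Lie
bracket of `g` is given as a bilinear map `lb` (with `ad_u = lb u`). -/
theorem stmt_16
    (lb : E →ₗ[ℝ] E →ₗ[ℝ] E)
    (hlb_alt : ∀ x : E, lb x x = 0)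
    (hlb_jac : ∀ x y z : E, lb x (lb y z) = lb (lb x y) z + lb y (lb x z))
    (Ad : G →* (E ≃L[ℝ] E))
    (π : G → (E →L[ℝ] ℝ) →L[ℝ] E)
    (hskew : ∀ (g : G) (ξ η : E →L[ℝ] ℝ), ξ (π g η) = - η (π g ξ))
    (hcoc : ∀ (g h : G) (ξ : E →L[ℝ] ℝ),
      π (g * h) ξ = π g ξ + Ad g (π h (ξ.comp (Ad g).toContinuousLinearMap)))
    -- a one-parameter subgroup `t ↦ e^{tu}` in the direction `u`:
    (γ : ℝ → G) (hγ0 : γ 0 = 1) (u : E)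
    (hAd : HasDerivAt (fun t => (Ad (γ t)).toContinuousLinearMap)
      (LinearMap.toContinuousLinearMap (lb u)) 0)
    (hAdinv : HasDerivAt (fun t => (Ad (γ t)⁻¹).toContinuousLinearMap)
      (- LinearMap.toContinuousLinearMap (lb u)) 0)
    -- `T₁π = ϖ` in the direction `u`, `W = ϖ_u`:
    (W : (E →L[ℝ] ℝ) →L[ℝ] E)
    (hπ : HasDerivAt (fun t => π (γ t)) W 0) :
    (∀ (g g' : G) (X : E × (E →L[ℝ] ℝ)),
        AdD Ad π (g * g') X = AdD Ad π g (AdD Ad π g' X))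
      ∧ (∀ (x : E) (ξ : E →L[ℝ] ℝ),
          HasDerivAt (fun t => AdD Ad π (γ t) (x, ξ))
            (lb u x + W ξ, - ξ.comp (LinearMap.toContinuousLinearMap (lb u))) 0) := by
  -- `π 1 = 0`
  have hA1 : Ad (1:G) = 1 := map_one Ad
  have hπ1 : ∀ ξ : E →L[ℝ] ℝ, π 1 ξ = 0 := by
    intro ξ
    have h := hcoc 1 1 ξ
    have h1 : ξ.comp (Ad 1).toContinuousLinearMap = ξ := by
      rw [hA1]; ext y; rfl
    rw [h1, one_mul] at h
    have h2 : (Ad 1) (π 1 ξ) = π 1 ξ := by rw [hA1]; rfl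
    rw [h2] at h
    exact (left_eq_add.mp h)
  constructor
  · -- the action property
    intro g g' X
    obtain ⟨x, ξ⟩ := X
    have adinv : ∀ (a : G) (y : E), (Ad a⁻¹) ((Ad a) y) = y := by
      intro a y
      have : (Ad a⁻¹) ((Ad a) y) = (Ad a⁻¹ * Ad a) y := rfl
      rw [this, ← map_mul, inv_mul_cancel, hA1]; rfl
    have hcomp : (ξ.comp (Ad g'⁻¹).toContinuousLinearMap).comp (Ad g⁻¹).toContinuousLinearMap
        = ξ.comp (Ad (g * g')⁻¹).toContinuousLinearMap := by
      ext y
      have : (Ad (g * g')⁻¹) y = (Ad g'⁻¹) ((Ad g⁻¹) y) := by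
        rw [mul_inv_rev, map_mul]; rfl
      simp only [ContinuousLinearMap.coe_comp', Function.comp_apply,
        ContinuousLinearEquiv.coe_coe, this]
    have hback : (ξ.comp (Ad (g * g')⁻¹).toContinuousLinearMap).comp (Ad g).toContinuousLinearMap
        = ξ.comp (Ad g'⁻¹).toContinuousLinearMap := by
      ext y
      have : (Ad (g * g')⁻¹) ((Ad g) y) = (Ad g'⁻¹) y := by
        rw [mul_inv_rev, map_mul]
        have h' : (Ad g'⁻¹ * Ad g⁻¹) ((Ad g) y) = (Ad g'⁻¹) ((Ad g⁻¹) ((Ad g) y)) := rfl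
        rw [h', adinv]
      simp only [ContinuousLinearMap.coe_comp', Function.comp_apply,
        ContinuousLinearEquiv.coe_coe, this]
    simp only [AdD, hcomp]
    refine Prod.ext ?_ rfl
    rw [hcoc g g' _, hback]
    simp only [map_mul, map_add]
    have hm : (Ad g * Ad g') x = (Ad g) ((Ad g') x) := rfl
    rw [hm]
    abel
  · -- the infinitesimal generator
    intro x ξ
    -- derivative of the second component
    have h2 : HasDerivAt (fun t => ξ.comp (Ad (γ t)⁻¹).toContinuousLinearMap)
        (- ξ.comp (LinearMap.toContinuousLinearMap (lb u))) 0 := by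
      have := (hasDerivAt_const (0:ℝ) ξ).clm_comp hAdinv
      simpa using this
    -- derivative of `t ↦ Ad (γ t) x`
    have h1a : HasDerivAt (fun t => (Ad (γ t)) x) ((lb u) x) 0 := by
      have := hAd.clm_apply (hasDerivAt_const (0:ℝ) x)
      simpa using this
    -- derivative of `t ↦ π (γ t) (ξ ∘ Ad (γ t)⁻¹)`
    have h1b : HasDerivAt
        (fun t => π (γ t) (ξ.comp (Ad (γ t)⁻¹).toContinuousLinearMap)) (W ξ) 0 := by
      have h := hπ.clm_apply h2
      have e1 : ξ.comp (Ad (γ 0)⁻¹).toContinuousLinearMap = ξ := by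
        rw [hγ0, inv_one, hA1]; ext y; rfl
      rw [e1, hγ0] at h
      simpa [hπ1] using h
    have h1 : HasDerivAt
        (fun t => (Ad (γ t)) x + π (γ t) (ξ.comp (Ad (γ t)⁻¹).toContinuousLinearMap))
        ((lb u) x + W ξ) 0 := h1a.add h1b
    exact h1.prodMk h2

end
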